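/- List-scheduling greedy upper bound: let L : Fin N → ℝ be the final machine loads produced by the greedy algorithm on a list of nonnegative weights w_1, …, w_F. Then the maximum final load satisfies max_{j} L j ≤ (∑_{i} w_i)/N + max_{i} w_i. -/

import Mathlib

open Finset

/-- The machine of minimal current load, ties broken by lowest machine index. -/
noncomputable def minIdx {N : ℕ} [NeZero N] (loads : Fin N → ℝ) : Fin N :=
  (Finset.univ.filter fun j => ∀ i, loads j ≤ loads i).min' (by
    classical
    obtain ⟨j, -, hj⟩ := Finset.exists_min_image (Finset.univ : Finset (Fin N)) loads
      Finset.univ_nonempty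
    exact ⟨j, Finset.mem_filter.mpr ⟨Finset.mem_univ j, fun i => hj i (Finset.mem_univ i)⟩⟩)

/-- Final machine loads of the list-scheduling greedy algorithm: process the
weights in list order, starting from all-zero loads, each time adding the weight
to a machine of minimal current cumulative load (lowest index on ties). -/
noncomputable def greedyLoads (N : ℕ) [NeZero N] (ws : List ℝ) : Fin N → ℝ :=
  ws.foldl
    (fun loads w => Function.update loads (minIdx loads) (loads (minIdx loads) + w))
    (fun _ => 0)

lemma minIdx_le {N : ℕ} [NeZero N] (loads : Fin N → ℝ) (i : Fin N) :
    loads (minIdx loads) ≤ loads i := by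
  have h := Finset.min'_mem (Finset.univ.filter fun j => ∀ i, loads j ≤ loads i)
    (by
      classical
      obtain ⟨j, -, hj⟩ := Finset.exists_min_image (Finset.univ : Finset (Fin N)) loads
        Finset.univ_nonempty
      exact ⟨j, Finset.mem_filter.mpr ⟨Finset.mem_univ j, fun i => hj i (Finset.mem_univ i)⟩⟩)
  rw [Finset.mem_filter] at h
  exact h.2 i

lemma foldr_max_max (a b : ℝ) (l : List ℝ) :
    l.foldr max (max a b) = max a (l.foldr max b) := by
  induction l with
  | nil => rfl
  | cons x xs ih =>
      simp [List.foldr, ih, max_left_comm]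

lemma sum_update_add {N : ℕ} [NeZero N] (loads : Fin N → ℝ) (m : Fin N) (w : ℝ) :
    ∑ i, Function.update loads m (loads m + w) i = (∑ i, loads i) + w := by
  classical
  rw [Finset.sum_update_of_mem (Finset.mem_univ m), ← Finset.erase_eq]
  have := Finset.add_sum_erase Finset.univ loads (Finset.mem_univ m)
  linarith

lemma greedy_invariant {N : ℕ} [NeZero N] (ws : List ℝ) :
    ∀ (loads : Fin N → ℝ) (C : ℝ), (∀ w ∈ ws, 0 ≤ w) →
      (∀ j, loads j ≤ (∑ i, loads i) / (N : ℝ) + C) →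
      ∀ j, (ws.foldl
          (fun loads w => Function.update loads (minIdx loads) (loads (minIdx loads) + w))
          loads) j ≤
        (∑ i, (ws.foldl
          (fun loads w => Function.update loads (minIdx loads) (loads (minIdx loads) + w))
          loads) i) / (N : ℝ) + ws.foldr max C := by
  induction ws with
  | nil => intro loads C _ h j; exact h j
  | cons w ws ih =>
      intro loads C hw h j
      have hN : (0 : ℝ) < (N : ℝ) := by
        exact_mod_cast Nat.pos_of_ne_zero (NeZero.ne N)
      have hw0 : 0 ≤ w := hw w List.mem_cons_self
      set m := minIdx loads with hm
      set loads' := Function.update loads m (loads m + w) with hl'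
      have hsum' : ∑ i, loads' i = (∑ i, loads i) + w := sum_update_add loads m w
      have hmin : (N : ℝ) * loads m ≤ ∑ i, loads i := by
        calc (N : ℝ) * loads m = ∑ _i : Fin N, loads m := by
              simp [Finset.sum_const, mul_comm]
          _ ≤ ∑ i, loads i := Finset.sum_le_sum fun i _ => minIdx_le loads i
      have hstep : ∀ j, loads' j ≤ (∑ i, loads' i) / (N : ℝ) + max w C := by
        intro j
        rw [hsum']
        by_cases hj : j = m
        · have h1 : loads' j = loads m + w := by rw [hl', hj, Function.update_self]
          rw [h1]
          have h2 : loads m ≤ (∑ i, loads i) / (N : ℝ) := by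
            rw [le_div_iff₀ hN, mul_comm]; exact hmin
          have h3 : w ≤ w / (N : ℝ) + max w C := by
            have : w / (N : ℝ) ≥ 0 := div_nonneg hw0 hN.le
            have := le_max_left w C
            linarith
          have : ((∑ i, loads i) + w) / (N : ℝ)
              = (∑ i, loads i) / (N : ℝ) + w / (N : ℝ) := by ring
          rw [this]; linarith
        · have h1 : loads' j = loads j := by simp [hl', Function.update_of_ne hj]
          rw [h1]
          have h2 := h j
          have h3 : (∑ i, loads i) / (N : ℝ) ≤ ((∑ i, loads i) + w) / (N : ℝ) :=
            (div_le_div_iff_of_pos_right hN).mpr (by linarith)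
          have h4 := le_max_right w C
          linarith
      have := ih loads' (max w C) (fun x hx => hw x (List.mem_cons_of_mem w hx)) hstep j
      rw [List.foldl_cons]
      calc _ ≤ _ := this
        _ ≤ _ := by
            rw [List.foldr_cons, foldr_max_max]

lemma greedy_sum {N : ℕ} [NeZero N] (ws : List ℝ) :
    ∀ loads : Fin N → ℝ,
      ∑ i, (ws.foldl
          (fun loads w => Function.update loads (minIdx loads) (loads (minIdx loads) + w))
          loads) i = (∑ i, loads i) + ws.sum := by
  induction ws with
  | nil => intro loads; simp
  | cons w ws ih =>
      intro loads
      rw [List.foldl_cons, ih, sum_update_add, List.sum_cons]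
      ring

/-- greedy upper bound `max_j L j ≤ (∑ w)/N + max_i w_i`
(the max weight read as `0` for the empty list). -/
theorem greedy_max_load_le (N : ℕ) [NeZero N] (ws : List ℝ)
    (hw : ∀ w ∈ ws, 0 ≤ w) :
    Finset.univ.sup' Finset.univ_nonempty (greedyLoads N ws) ≤
      ws.sum / (N : ℝ) + ws.foldr max 0 := by
  apply Finset.sup'_le
  intro j _
  have h0 : ∀ j : Fin N, (fun _ : Fin N => (0:ℝ)) j
      ≤ (∑ i : Fin N, (fun _ : Fin N => (0:ℝ)) i) / (N : ℝ) + 0 := by simp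
  have h := greedy_invariant ws (fun _ => 0) 0 hw h0 j
  have hs := greedy_sum (N := N) ws (fun _ => 0)
  simp only [Finset.sum_const, smul_zero, zero_add] at hs
  unfold greedyLoads
  calc _ ≤ _ := h
    _ = ws.sum / (N : ℝ) + ws.foldr max 0 := by rw [hs]
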